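/- Heine's q-Gauss summation formula: for |q|<1 and |c/(ab)|<1, the series ∑_{n=0}^∞ [(a;q)_n (b;q)_n / ((q;q)_n (c;q)_n)] (c/ab)^n converges and equals (c/a;q)_∞ (c/b;q)_∞ / [(c;q)_∞ (c/ab;q)_∞]. -/

import Mathlib

set_option maxHeartbeats 2000000

noncomputable def qp (a q : ℂ) (n : ℕ) : ℂ := ∏ i ∈ Finset.range n, (1 - a * q ^ i)

noncomputable def qpInf (a q : ℂ) : ℂ := ∏' i : ℕ, (1 - a * q ^ i)

open Filter Topology

lemma qp_zero (x q : ℂ) : qp x q 0 = 1 := Finset.prod_range_zero _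

lemma qp_succ (x q : ℂ) (n : ℕ) : qp x q (n+1) = qp x q n * (1 - x * q ^ n) :=
  Finset.prod_range_succ _ _

lemma qp_succ' (x q : ℂ) (n : ℕ) : qp x q (n+1) = (1 - x) * qp (q*x) q n := by
  unfold qp
  rw [Finset.prod_range_succ']
  rw [mul_comm]
  congr 1
  · simp
  · exact Finset.prod_congr rfl fun i _ => by rw [pow_succ']; ring

lemma qp_shift (x q : ℂ) (n : ℕ) : qp x q n * (1 - x * q ^ n) = (1 - x) * qp (q*x) q n := by
  rw [← qp_succ, qp_succ']

lemma qp_add (x q : ℂ) (m n : ℕ) : qp x q (m+n) = qp x q m * qp (x*q^m) q n := by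
  unfold qp
  rw [Finset.prod_range_add]
  congr 1
  exact Finset.prod_congr rfl fun i _ => by rw [pow_add]; ring

lemma qp_factor_ne {x q : ℂ} (h : ∀ n, qp x q n ≠ 0) (i : ℕ) : 1 - x * q ^ i ≠ 0 := by
  intro h0
  exact h (i+1) (Finset.prod_eq_zero (Finset.self_mem_range_succ i) h0)

lemma qp_ne_zero {x q : ℂ} (h : ∀ i, 1 - x * q ^ i ≠ 0) (n : ℕ) : qp x q n ≠ 0 :=
  Finset.prod_ne_zero_iff.mpr fun i _ => h i

lemma norm_qp_le {q : ℂ} (hq : ‖q‖ < 1) (x : ℂ) (n : ℕ) :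
    ‖qp x q n‖ ≤ Real.exp (‖x‖ / (1 - ‖q‖)) := by
  have h1 : ‖qp x q n‖ = ∏ i ∈ Finset.range n, ‖1 - x * q ^ i‖ := norm_prod _ _
  rw [h1]
  have h2 : ∀ i ∈ Finset.range n, ‖1 - x * q ^ i‖ ≤ Real.exp (‖x‖ * ‖q‖ ^ i) := by
    intro i _
    calc ‖1 - x * q ^ i‖ ≤ ‖(1:ℂ)‖ + ‖x * q ^ i‖ := norm_sub_le _ _
    _ = ‖x‖ * ‖q‖ ^ i + 1 := by rw [norm_one, norm_mul, norm_pow]; ring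
    _ ≤ Real.exp (‖x‖ * ‖q‖ ^ i) := Real.add_one_le_exp _
  calc ∏ i ∈ Finset.range n, ‖1 - x * q ^ i‖
      ≤ ∏ i ∈ Finset.range n, Real.exp (‖x‖ * ‖q‖ ^ i) :=
        Finset.prod_le_prod (fun i _ => norm_nonneg _) h2
    _ = Real.exp (∑ i ∈ Finset.range n, ‖x‖ * ‖q‖ ^ i) := (Real.exp_sum _ _).symm
    _ ≤ Real.exp (‖x‖ / (1 - ‖q‖)) := by
        apply Real.exp_le_exp.mpr
        rw [← Finset.mul_sum, div_eq_mul_inv]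
        apply mul_le_mul_of_nonneg_left _ (norm_nonneg x)
        calc ∑ i ∈ Finset.range n, ‖q‖ ^ i ≤ ∑' i : ℕ, ‖q‖ ^ i :=
              (summable_geometric_of_lt_one (norm_nonneg q) hq).sum_le_tsum _
                (fun i _ => pow_nonneg (norm_nonneg q) i)
          _ = (1 - ‖q‖)⁻¹ := tsum_geometric_of_lt_one (norm_nonneg q) hq

lemma hasProd_one_sub {q : ℂ} (hq : ‖q‖ < 1) (x : ℂ) (hx : ∀ i, 1 - x * q ^ i ≠ 0) :
    ∃ S : ℂ, HasProd (fun i : ℕ => 1 - x * q ^ i) (Complex.exp S) ∧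
      HasSum (fun i : ℕ => Complex.log (1 - x * q ^ i)) S := by
  have hsum : Summable (fun i : ℕ => Complex.log (1 - x * q ^ i)) := by
    obtain ⟨N, hN⟩ : ∃ N : ℕ, ‖x‖ * ‖q‖ ^ N ≤ 1/2 := by
      rcases eq_or_ne x 0 with h | h
      · exact ⟨0, by simp [h]⟩
      · have hx0 : (0:ℝ) < ‖x‖ := norm_pos_iff.mpr h
        obtain ⟨N, hN⟩ := exists_pow_lt_of_lt_one (by positivity : (0:ℝ) < 1/(2*‖x‖))
          hq
        refine ⟨N, ?_⟩
        calc ‖x‖ * ‖q‖ ^ N ≤ ‖x‖ * (1/(2*‖x‖)) := by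
              apply mul_le_mul_of_nonneg_left hN.le (norm_nonneg x)
          _ = 1/2 := by rw [one_div, mul_inv, mul_comm (2:ℝ)⁻¹, ← mul_assoc, mul_inv_cancel₀ (ne_of_gt hx0), one_mul, one_div]
    rw [← summable_nat_add_iff N]
    apply Summable.of_norm_bounded (g := fun i => (3/2) * (‖x‖ * ‖q‖^N * ‖q‖ ^ i))
    · apply Summable.mul_left
      exact (summable_geometric_of_lt_one (norm_nonneg q) hq).mul_left _
    · intro i
      have hb : ‖-(x * q ^ (i + N))‖ ≤ 1/2 := by
        rw [norm_neg, norm_mul, norm_pow, pow_add]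
        calc ‖x‖ * (‖q‖^i * ‖q‖^N) ≤ ‖x‖ * ‖q‖^N * 1 := by
              rw [mul_comm (‖q‖^i)]
              rw [← mul_assoc]
              apply mul_le_mul_of_nonneg_left (pow_le_one₀ (norm_nonneg q) hq.le)
              positivity
          _ ≤ 1/2 := by rw [mul_one]; exact hN
      have := Complex.norm_log_one_add_half_le_self hb
      rw [show (1 : ℂ) + -(x * q ^ (i+N)) = 1 - x * q ^ (i+N) by ring] at this
      calc ‖Complex.log (1 - x * q ^ (i + N))‖ ≤ 3/2 * ‖-(x * q ^ (i+N))‖ := this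
        _ = 3/2 * (‖x‖ * ‖q‖^N * ‖q‖ ^ i) := by
            rw [norm_neg, norm_mul, norm_pow, pow_add]; ring
  obtain ⟨S, hS⟩ := hsum
  refine ⟨S, ?_, hS⟩
  have key : ∀ s : Finset ℕ, ∏ i ∈ s, (1 - x * q ^ i) =
      Complex.exp (∑ i ∈ s, Complex.log (1 - x * q ^ i)) := by
    intro s
    rw [Complex.exp_sum]
    exact Finset.prod_congr rfl fun i _ => (Complex.exp_log (hx i)).symm
  have : Tendsto (fun s : Finset ℕ => ∏ i ∈ s, (1 - x * q ^ i)) atTop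
      (𝓝 (Complex.exp S)) := by
    simp only [key]
    exact (Complex.continuous_exp.tendsto S).comp hS
  exact this

lemma multipliable_one_sub {q : ℂ} (hq : ‖q‖ < 1) (x : ℂ) :
    Multipliable (fun i : ℕ => 1 - x * q ^ i) := by
  by_cases hx : ∀ i, 1 - x * q ^ i ≠ 0
  · obtain ⟨S, hP, _⟩ := hasProd_one_sub hq x hx
    exact ⟨_, hP⟩
  · push_neg at hx
    obtain ⟨i₀, hi₀⟩ := hx
    refine ⟨0, ?_⟩
    rw [HasProd]
    apply tendsto_const_nhds.congr'
    filter_upwards [eventually_ge_atTop ({i₀} : Finset ℕ)] with s hs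
    exact (Finset.prod_eq_zero (hs (Finset.mem_singleton_self i₀)) hi₀).symm

lemma tendsto_qp {q : ℂ} (hq : ‖q‖ < 1) (x : ℂ) :
    Tendsto (fun n => qp x q n) atTop (𝓝 (qpInf x q)) :=
  (multipliable_one_sub hq x).hasProd.tendsto_prod_nat

lemma qpInf_ne_zero {q : ℂ} (hq : ‖q‖ < 1) {x : ℂ} (hx : ∀ i, 1 - x * q ^ i ≠ 0) :
    qpInf x q ≠ 0 := by
  obtain ⟨S, hP, _⟩ := hasProd_one_sub hq x hx
  rw [show qpInf x q = Complex.exp S from hP.tprod_eq]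
  exact Complex.exp_ne_zero S

lemma qp_lower {q : ℂ} (hq : ‖q‖ < 1) {x : ℂ} (hx : ∀ i, 1 - x * q ^ i ≠ 0) :
    ∃ δ : ℝ, 0 < δ ∧ ∀ n, δ ≤ ‖qp x q n‖ := by
  have hL : qpInf x q ≠ 0 := qpInf_ne_zero hq hx
  have hL0 : 0 < ‖qpInf x q‖ := norm_pos_iff.mpr hL
  have htend : Tendsto (fun n => ‖qp x q n‖) atTop (𝓝 ‖qpInf x q‖) :=
    (tendsto_qp hq x).norm
  have hev : ∀ᶠ n in atTop, ‖qpInf x q‖/2 < ‖qp x q n‖ :=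
    htend.eventually (eventually_gt_nhds (half_lt_self hL0))
  obtain ⟨N, hN⟩ := eventually_atTop.mp hev
  have hne : (Finset.range (N+1)).Nonempty := Finset.nonempty_range_add_one
  set m := (Finset.range (N+1)).inf' hne (fun n => ‖qp x q n‖) with hm
  have hmpos : 0 < m := by
    rw [hm, Finset.lt_inf'_iff]
    exact fun i _ => norm_pos_iff.mpr (qp_ne_zero hx i)
  refine ⟨min (‖qpInf x q‖/2) m, lt_min (by positivity) hmpos, fun n => ?_⟩
  rcases le_or_gt n N with h | h
  · exact le_trans (min_le_right _ _)
      (Finset.inf'_le _ (Finset.mem_range.mpr (Nat.lt_succ_of_le h)))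
  · exact le_trans (min_le_left _ _) (hN n h.le).le

lemma key_id (a b q w x A B Q C P W : ℂ)
    (hQ : Q ≠ 0) (hC : C ≠ 0)
    (h1r : (1:ℂ) - w*a*b ≠ 0) (h2 : (1:ℂ) - w*a*b*x ≠ 0) (h3 : (1:ℂ) - q*x ≠ 0)
    (h4 : (1:ℂ) - q*(w*a*b)*x ≠ 0)
    (hrel : P*(1 - w*a*b*x) = (1 - w*a*b)*C) :
    ((1 - w*q)*(1 - w*q^2)) *
      ((1-w*a*b)*(1-w) * (A*B/(Q*P)*W)
        - (1-w*b)*(1-w*a) * (A*B*(x*W)/(Q*C)))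
    = ((1 - w*q)*(1 - w*q^2)
        + ((1 - w*q^2)*(w*q*(1+w*a*b) - w*(a+b) - (1 + w*a*b - w*b - w*a)))*x
        + ((1 - w*q)*((1 + w*a*b - w*b - w*a)*q*(1+w*a*b) - w*(w*a*b)*q^2 + w*a*b)
            + q*((1+w*a*b) - w*(a+b))*(w*q*(1+w*a*b) - w*(a+b) - (1 + w*a*b - w*b - w*a)))*x^2)
        * (A*B*W/(Q*C))
      - ((1 - w*q)*(1 - w*q^2)
        + ((1 - w*q^2)*(w*q*(1+w*a*b) - w*(a+b) - (1 + w*a*b - w*b - w*a)))*(q*x)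
        + ((1 - w*q)*((1 + w*a*b - w*b - w*a)*q*(1+w*a*b) - w*(w*a*b)*q^2 + w*a*b)
            + q*((1+w*a*b) - w*(a+b))*(w*q*(1+w*a*b) - w*(a+b) - (1 + w*a*b - w*b - w*a)))*(q*x)^2)
        * (A*(1-a*x)*B*(1-b*x)*(w*W)/(Q*(1-q*x)*(C*(1-q*(w*a*b)*x)))) := by
  have hPe : P = (1 - w*a*b)*C/(1 - w*a*b*x) := (eq_div_iff h2).mpr hrel
  rw [hPe]
  have h4' : (1:ℂ) - w*q*a*b*x ≠ 0 := by rwa [show (1:ℂ) - w*q*a*b*x = 1 - q*(w*a*b)*x by ring]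
  field_simp
  ring

noncomputable def Tt (a b q r : ℂ) (n : ℕ) : ℂ :=
  qp a q n * qp b q n / (qp q q n * qp r q n) * (r/(a*b))^n

noncomputable def Rpsi (a b q r : ℂ) (n : ℕ) : ℂ :=
  ((1 - (r/(a*b))*q)*(1 - (r/(a*b))*q^2)
    + ((1 - (r/(a*b))*q^2)*((r/(a*b))*q*(1+r) - (r/(a*b))*(a+b)
        - (1 + r - (r/(a*b))*b - (r/(a*b))*a)))*(q^n)
    + ((1 - (r/(a*b))*q)*((1 + r - (r/(a*b))*b - (r/(a*b))*a)*q*(1+r) - (r/(a*b))*r*q^2 + r)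
        + q*((1+r) - (r/(a*b))*(a+b))*((r/(a*b))*q*(1+r) - (r/(a*b))*(a+b)
          - (1 + r - (r/(a*b))*b - (r/(a*b))*a)))*(q^n)^2)
  * (qp a q n * qp b q n * (r/(a*b))^n / (qp q q n * qp (q*r) q n))

lemma termwise (a b q r : ℂ) (ha : a ≠ 0) (hb : b ≠ 0)
    (hQ : ∀ n, qp q q n ≠ 0) (hr : ∀ i, (1:ℂ) - r*q^i ≠ 0) (n : ℕ) :
    (1 - (r/(a*b))*q)*(1 - (r/(a*b))*q^2) *
      ((1-r)*(1-r/(a*b)) * Tt a b q r n - (1-r/a)*(1-r/b) * Tt a b q (q*r) n)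
    = Rpsi a b q r n - Rpsi a b q r (n+1) := by
  have hab : a*b ≠ 0 := mul_ne_zero ha hb
  have hw : r/(a*b)*a*b = r := by field_simp
  have hqr : ∀ i, (1:ℂ) - q*r*q^i ≠ 0 := by
    intro i
    have h := hr (i+1)
    rw [pow_succ] at h
    rwa [show (1:ℂ) - q*r*q^i = 1 - r*(q^i*q) by ring]
  have hqrfac : ∀ i, (1:ℂ) - (q*r)*q^i ≠ 0 := hqr
  have hC : qp (q*r) q n ≠ 0 := qp_ne_zero hqrfac n
  have h1r : (1:ℂ) - r ≠ 0 := by simpa using hr 0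
  have h1rx : (1:ℂ) - r*q^n ≠ 0 := hr n
  have hPrn : qp r q n ≠ 0 := qp_ne_zero hr n
  have key := key_id a b q (r/(a*b)) (q^n) (qp a q n) (qp b q n) (qp q q n)
      (qp (q*r) q n) (qp r q n) ((r/(a*b))^n) (hQ n) hC
      (by rw [hw]; exact h1r)
      (by rw [hw]; exact h1rx)
      (qp_factor_ne hQ n)
      (by rw [hw]; exact hqr n)
      (by rw [hw]; exact qp_shift r q n)
  rw [hw] at key
  have hra : r/a = r/(a*b)*b := by field_simp
  have hrb : r/b = r/(a*b)*a := by field_simp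
  unfold Tt Rpsi
  rw [qp_succ a q n, qp_succ b q n, qp_succ q q n, qp_succ (q*r) q n, hra, hrb]
  linear_combination key

lemma one_sub_ne_of_norm_lt {z : ℂ} (h : ‖z‖ < 1) : (1:ℂ) - z ≠ 0 := by
  intro h0
  have : z = 1 := by linear_combination -h0
  rw [this] at h
  simp at h

lemma Rpsi_zero (a b q r : ℂ) : Rpsi a b q r 0 = 0 := by
  simp only [Rpsi, qp_zero, pow_zero]
  ring

lemma summable_Tt {q a b : ℂ} (hq : ‖q‖ < 1) (r : ℂ)
    (hr : ∀ i, (1:ℂ) - r*q^i ≠ 0) (hQf : ∀ i, (1:ℂ) - q*q^i ≠ 0)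
    (hw : ‖r/(a*b)‖ < 1) : Summable (Tt a b q r) := by
  obtain ⟨δq, hδq, hδqle⟩ := qp_lower hq hQf
  obtain ⟨δr, hδr, hδrle⟩ := qp_lower hq hr
  apply Summable.of_norm_bounded
    (g := fun n => (Real.exp (‖a‖/(1-‖q‖)) * Real.exp (‖b‖/(1-‖q‖)) / (δq*δr)) * ‖r/(a*b)‖^n)
  · exact (summable_geometric_of_lt_one (norm_nonneg _) hw).mul_left _
  · intro n
    rw [Tt, norm_mul, norm_div, norm_mul, norm_mul, norm_pow]
    apply mul_le_mul _ le_rfl (pow_nonneg (norm_nonneg _) n) (by positivity)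
    apply div_le_div₀ (by positivity)
      (mul_le_mul (norm_qp_le hq a n) (norm_qp_le hq b n) (norm_nonneg _) (by positivity))
      (by positivity)
      (mul_le_mul (hδqle n) (hδrle n) hδr.le (norm_nonneg _))

lemma tendsto_poly_mul {u : ℕ → ℂ} {q e0 e1 e2 : ℂ}
    (hq0 : Tendsto (fun n : ℕ => q^n) atTop (𝓝 0)) (hu : Tendsto u atTop (𝓝 0)) :
    Tendsto (fun n => (e0 + e1*q^n + e2*(q^n)^2) * u n) atTop (𝓝 0) := by
  have h := ((tendsto_const_nhds (x := e0)).add (hq0.const_mul e1)).add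
    ((hq0.pow 2).const_mul e2)
  have h2 := h.mul hu
  simpa using h2

lemma rec_step {q a b : ℂ} (hq : ‖q‖ < 1) (ha : a ≠ 0) (hb : b ≠ 0)
    (hQ : ∀ n, qp q q n ≠ 0) (r : ℂ) (hr : ∀ i, (1:ℂ) - r*q^i ≠ 0)
    (hw : ‖r/(a*b)‖ < 1) :
    (1-r)*(1-r/(a*b)) * ∑' n, Tt a b q r n
      = (1-r/a)*(1-r/b) * ∑' n, Tt a b q (q*r) n := by
  have hQf : ∀ i, (1:ℂ) - q*q^i ≠ 0 := qp_factor_ne hQ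
  have hqr : ∀ i, (1:ℂ) - (q*r)*q^i ≠ 0 := by
    intro i
    have h := hr (i+1)
    rw [pow_succ] at h
    rwa [show (1:ℂ) - q*r*q^i = 1 - r*(q^i*q) by ring]
  have hwqr : ‖(q*r)/(a*b)‖ < 1 := by
    rw [show (q*r)/(a*b) = q*(r/(a*b)) by ring, norm_mul]
    calc ‖q‖ * ‖r/(a*b)‖ ≤ 1 * ‖r/(a*b)‖ :=
          mul_le_mul_of_nonneg_right hq.le (norm_nonneg _)
      _ = ‖r/(a*b)‖ := one_mul _
      _ < 1 := hw
  have hS1 : Summable (Tt a b q r) := summable_Tt hq r hr hQf hw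
  have hS2 : Summable (Tt a b q (q*r)) := summable_Tt hq (q*r) hqr hQf hwqr
  set P0c : ℂ := (1 - (r/(a*b))*q)*(1 - (r/(a*b))*q^2) with hP0c
  have hwq : ‖r/(a*b)*q‖ < 1 := by
    rw [norm_mul]
    calc ‖r/(a*b)‖*‖q‖ ≤ 1*‖q‖ := mul_le_mul_of_nonneg_right hw.le (norm_nonneg _)
      _ = ‖q‖ := one_mul _
      _ < 1 := hq
  have hwq2 : ‖r/(a*b)*q^2‖ < 1 := by
    rw [show r/(a*b)*q^2 = (r/(a*b)*q)*q by ring, norm_mul]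
    calc ‖r/(a*b)*q‖ * ‖q‖ < 1*1 :=
          mul_lt_mul' hwq.le hq (norm_nonneg _) one_pos
      _ = 1 := one_mul _
  have hP0ne : P0c ≠ 0 :=
    mul_ne_zero (one_sub_ne_of_norm_lt hwq) (one_sub_ne_of_norm_lt hwq2)
  -- limit of Rpsi
  obtain ⟨δq, hδq, hδqle⟩ := qp_lower hq hQf
  obtain ⟨δr, hδr, hδrle⟩ := qp_lower hq hqr
  have hubound : ∀ n, ‖qp a q n * qp b q n * (r/(a*b))^n / (qp q q n * qp (q*r) q n)‖
      ≤ (Real.exp (‖a‖/(1-‖q‖)) * Real.exp (‖b‖/(1-‖q‖)) / (δq*δr)) * ‖r/(a*b)‖^n := by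
    intro n
    simp only [norm_div, norm_mul, norm_pow]
    rw [show Real.exp (‖a‖/(1-‖q‖)) * Real.exp (‖b‖/(1-‖q‖)) / (δq*δr) * (‖r‖/(‖a‖*‖b‖))^n
        = Real.exp (‖a‖/(1-‖q‖)) * Real.exp (‖b‖/(1-‖q‖)) * (‖r‖/(‖a‖*‖b‖))^n / (δq*δr) by ring]
    gcongr
    · exact norm_qp_le hq a n
    · exact norm_qp_le hq b n
    · exact hδqle n
    · exact hδrle n
  have hu0 : Tendsto (fun n => qp a q n * qp b q n * (r/(a*b))^n / (qp q q n * qp (q*r) q n))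
      atTop (𝓝 0) := by
    apply squeeze_zero_norm hubound
    rw [show (0:ℝ) = (Real.exp (‖a‖/(1-‖q‖)) * Real.exp (‖b‖/(1-‖q‖)) / (δq*δr)) * 0 by ring]
    exact (tendsto_pow_atTop_nhds_zero_of_lt_one (norm_nonneg _) hw).const_mul _
  have hq0 : Tendsto (fun n : ℕ => (q:ℂ)^n) atTop (𝓝 0) :=
    tendsto_pow_atTop_nhds_zero_of_norm_lt_one hq
  have hRlim : Tendsto (fun n => Rpsi a b q r n) atTop (𝓝 0) := by
    simp only [Rpsi]
    exact tendsto_poly_mul hq0 hu0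
  -- telescoping
  have hterm := termwise a b q r ha hb hQ hr
  have hps : ∀ N, ∑ n ∈ Finset.range N,
      (P0c * ((1-r)*(1-r/(a*b)) * Tt a b q r n - (1-r/a)*(1-r/b) * Tt a b q (q*r) n))
      = Rpsi a b q r 0 - Rpsi a b q r N := by
    intro N
    rw [Finset.sum_congr rfl (fun n _ => hterm n)]
    exact Finset.sum_range_sub' (fun n => Rpsi a b q r n) N
  have hHS : HasSum (fun n =>
      P0c * ((1-r)*(1-r/(a*b)) * Tt a b q r n - (1-r/a)*(1-r/b) * Tt a b q (q*r) n))
      (P0c * ((1-r)*(1-r/(a*b)) * ∑' n, Tt a b q r n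
        - (1-r/a)*(1-r/b) * ∑' n, Tt a b q (q*r) n)) :=
    (((hS1.hasSum).mul_left _).sub ((hS2.hasSum).mul_left _)).mul_left P0c
  have h1 : Tendsto (fun N => Rpsi a b q r 0 - Rpsi a b q r N) atTop
      (𝓝 (P0c * ((1-r)*(1-r/(a*b)) * ∑' n, Tt a b q r n
        - (1-r/a)*(1-r/b) * ∑' n, Tt a b q (q*r) n))) := by
    apply hHS.tendsto_sum_nat.congr
    intro N
    exact hps N
  have h2 : Tendsto (fun N => Rpsi a b q r 0 - Rpsi a b q r N) atTop
      (𝓝 (Rpsi a b q r 0 - 0)) := tendsto_const_nhds.sub hRlim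
  have h3 := tendsto_nhds_unique h1 h2
  rw [Rpsi_zero, sub_zero] at h3
  have h4 := mul_eq_zero.mp h3
  rcases h4 with h4 | h4
  · exact absurd h4 hP0ne
  · linear_combination h4


theorem stmt3 (q a b c : ℂ) (hq : ‖q‖ < 1) (ha : a ≠ 0) (hb : b ≠ 0)
    (hz : ‖c / (a * b)‖ < 1)
    (hden : ∀ n : ℕ, qp q q n * qp c q n ≠ 0) :
    HasSum
      (fun n : ℕ => qp a q n * qp b q n / (qp q q n * qp c q n) * (c / (a * b)) ^ n)
      (qpInf (c / a) q * qpInf (c / b) q / (qpInf c q * qpInf (c / (a * b)) q)) := by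
  have hQ : ∀ n, qp q q n ≠ 0 := fun n => left_ne_zero_of_mul (hden n)
  have hcqp : ∀ n, qp c q n ≠ 0 := fun n => right_ne_zero_of_mul (hden n)
  have hQf : ∀ i, (1:ℂ) - q*q^i ≠ 0 := qp_factor_ne hQ
  have hcfac : ∀ i, (1:ℂ) - c*q^i ≠ 0 := qp_factor_ne hcqp
  have hrj : ∀ j i, (1:ℂ) - (c*q^j)*q^i ≠ 0 := by
    intro j i
    have h := hcfac (j+i)
    rwa [show (1:ℂ) - (c*q^j)*q^i = 1 - c*q^(j+i) by rw [pow_add]; ring]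
  have hwj' : ∀ j : ℕ, ‖(c*q^j)/(a*b)‖ = ‖c/(a*b)‖ * ‖q‖^j := by
    intro j
    rw [mul_div_right_comm, norm_mul, norm_pow]
  have hwj : ∀ j : ℕ, ‖(c*q^j)/(a*b)‖ < 1 := by
    intro j
    rw [hwj' j]
    calc ‖c/(a*b)‖ * ‖q‖^j ≤ ‖c/(a*b)‖ * 1 :=
          mul_le_mul_of_nonneg_left (pow_le_one₀ (norm_nonneg q) hq.le) (norm_nonneg _)
      _ = ‖c/(a*b)‖ := mul_one _
      _ < 1 := hz
  set S : ℕ → ℂ := fun j => ∑' n, Tt a b q (c*q^j) n with hS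
  have hSummableJ : ∀ j, Summable (Tt a b q (c*q^j)) :=
    fun j => summable_Tt hq _ (hrj j) hQf (hwj j)
  -- recursion in massaged form
  have hrec' : ∀ j, (1-c*q^j)*(1-c/(a*b)*q^j) * S j
      = (1-c/a*q^j)*(1-c/b*q^j) * S (j+1) := by
    intro j
    have h := rec_step hq ha hb hQ (c*q^j) (hrj j) (hwj j)
    rw [show q*(c*q^j) = c*q^(j+1) by rw [pow_succ]; ring] at h
    rw [show (c*q^j)/(a*b) = c/(a*b)*q^j from mul_div_right_comm c (q^j) (a*b),
        show (c*q^j)/a = c/a*q^j from mul_div_right_comm c (q^j) a,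
        show (c*q^j)/b = c/b*q^j from mul_div_right_comm c (q^j) b] at h
    exact h
  -- iteration
  have hiter : ∀ N, S 0 * (qp c q N * qp (c/(a*b)) q N)
      = qp (c/a) q N * qp (c/b) q N * S N := by
    intro N
    induction N with
    | zero => simp [qp_zero]
    | succ N IH =>
        rw [qp_succ c q N, qp_succ (c/(a*b)) q N, qp_succ (c/a) q N, qp_succ (c/b) q N]
        linear_combination ((1-c*q^N)*(1-c/(a*b)*q^N)) * IH
          + (qp (c/a) q N * qp (c/b) q N) * hrec' N
  -- uniform bounds for S N → 1
  obtain ⟨δq, hδq, hδqle⟩ := qp_lower hq hQf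
  obtain ⟨δc, hδc, hδcle⟩ := qp_lower hq hcfac
  set Ma := Real.exp (‖a‖/(1-‖q‖)) with hMa
  set Mb := Real.exp (‖b‖/(1-‖q‖)) with hMb
  set Mc := Real.exp (‖c‖/(1-‖q‖)) with hMc
  have hMapos : 0 < Ma := Real.exp_pos _
  have hMbpos : 0 < Mb := Real.exp_pos _
  have hMcpos : 0 < Mc := Real.exp_pos _
  have hlowshift : ∀ j n, δc/Mc ≤ ‖qp (c*q^j) q n‖ := by
    intro j n
    have heq : qp (c*q^j) q n = qp c q (j+n) / qp c q j := by
      rw [qp_add c q j n, mul_div_cancel_left₀ _ (hcqp j)]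
    rw [heq, norm_div]
    exact div_le_div₀ (norm_nonneg _) (hδcle (j+n))
      (norm_pos_iff.mpr (hcqp j)) (norm_qp_le hq c j)
  set KK := Ma*Mb/(δq*(δc/Mc)) with hKK
  have hKKpos : 0 < KK := by positivity
  have hTb : ∀ j n, ‖Tt a b q (c*q^j) n‖ ≤ KK * (‖c/(a*b)‖*‖q‖^j)^n := by
    intro j n
    simp only [Tt, norm_mul, norm_div, norm_pow]
    rw [show ‖c‖*‖q‖^j/(‖a‖*‖b‖) = ‖c‖/(‖a‖*‖b‖)*‖q‖^j by ring]
    apply mul_le_mul_of_nonneg_right _ (pow_nonneg (by positivity) n)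
    rw [hKK]
    gcongr
    · exact norm_qp_le hq a n
    · exact norm_qp_le hq b n
    · exact hδqle n
    · exact hlowshift j n
  have hT0 : ∀ r : ℂ, Tt a b q r 0 = 1 := by
    intro r
    simp [Tt, qp_zero]
  have htj : ∀ j : ℕ, ‖c/(a*b)‖*‖q‖^j < 1 := by
    intro j
    rw [← hwj' j]
    exact hwj j
  have htjle : ∀ j : ℕ, ‖c/(a*b)‖*‖q‖^j ≤ ‖c/(a*b)‖ := by
    intro j
    calc ‖c/(a*b)‖*‖q‖^j ≤ ‖c/(a*b)‖*1 :=
          mul_le_mul_of_nonneg_left (pow_le_one₀ (norm_nonneg q) hq.le) (norm_nonneg _)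
      _ = _ := mul_one _
  have hz1 : (0:ℝ) < 1 - ‖c/(a*b)‖ := by linarith
  have hSsub : ∀ N, ‖S N - 1‖ ≤ (KK*‖c/(a*b)‖/(1-‖c/(a*b)‖)) * ‖q‖^N := by
    intro N
    set t := ‖c/(a*b)‖*‖q‖^N with ht
    have ht0 : 0 ≤ t := by positivity
    have ht1 : t < 1 := htj N
    have htail : S N - 1 = ∑' n, Tt a b q (c*q^N) (n+1) := by
      have hSN : S N = ∑' n, Tt a b q (c*q^N) n := rfl
      rw [hSN, (hSummableJ N).tsum_eq_zero_add, hT0]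
      ring
    rw [htail]
    have hgeom : HasSum (fun n : ℕ => (KK*t)*t^n) ((KK*t)*(1-t)⁻¹) :=
      (hasSum_geometric_of_lt_one ht0 ht1).mul_left _
    have hbd : ∀ n : ℕ, ‖Tt a b q (c*q^N) (n+1)‖ ≤ (KK*t)*t^n := by
      intro n
      calc ‖Tt a b q (c*q^N) (n+1)‖ ≤ KK * t^(n+1) := hTb N (n+1)
        _ = (KK*t)*t^n := by rw [pow_succ]; ring
    calc ‖∑' n, Tt a b q (c*q^N) (n+1)‖ ≤ (KK*t)*(1-t)⁻¹ :=
          tsum_of_norm_bounded hgeom hbd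
      _ ≤ (KK*t)*(1-‖c/(a*b)‖)⁻¹ := by
          apply mul_le_mul_of_nonneg_left _ (by positivity)
          apply inv_anti₀ hz1
          have := htjle N
          linarith
      _ = (KK*‖c/(a*b)‖/(1-‖c/(a*b)‖)) * ‖q‖^N := by
          rw [ht]; ring
  have hStend : Tendsto S atTop (𝓝 1) := by
    have h0 : Tendsto (fun N => S N - 1) atTop (𝓝 0) := by
      apply squeeze_zero_norm hSsub
      rw [show (0:ℝ) = (KK*‖c/(a*b)‖/(1-‖c/(a*b)‖)) * 0 by ring]
      exact (tendsto_pow_atTop_nhds_zero_of_lt_one (norm_nonneg q) hq).const_mul _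
    have h1 := h0.add (tendsto_const_nhds (x := (1:ℂ)))
    simp only [sub_add_cancel, zero_add] at h1
    exact h1
  -- limits of both sides of hiter
  have hL1 : Tendsto (fun N => S 0 * (qp c q N * qp (c/(a*b)) q N)) atTop
      (𝓝 (S 0 * (qpInf c q * qpInf (c/(a*b)) q))) :=
    tendsto_const_nhds.mul ((tendsto_qp hq c).mul (tendsto_qp hq (c/(a*b))))
  have hL2 : Tendsto (fun N => qp (c/a) q N * qp (c/b) q N * S N) atTop
      (𝓝 (qpInf (c/a) q * qpInf (c/b) q * 1)) :=
    ((tendsto_qp hq (c/a)).mul (tendsto_qp hq (c/b))).mul hStend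
  have hkeyEq : S 0 * (qpInf c q * qpInf (c/(a*b)) q)
      = qpInf (c/a) q * qpInf (c/b) q * 1 :=
    tendsto_nhds_unique (hL1.congr hiter) hL2
  have hIc : qpInf c q ≠ 0 := qpInf_ne_zero hq hcfac
  have hIw : qpInf (c/(a*b)) q ≠ 0 := by
    apply qpInf_ne_zero hq
    intro i
    apply one_sub_ne_of_norm_lt
    rw [norm_mul, norm_pow]
    calc ‖c/(a*b)‖ * ‖q‖^i ≤ ‖c/(a*b)‖ := htjle i
      _ < 1 := hz
  have hS0 : S 0 = qpInf (c/a) q * qpInf (c/b) q / (qpInf c q * qpInf (c/(a*b)) q) := by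
    rw [eq_div_iff (mul_ne_zero hIc hIw)]
    linear_combination hkeyEq
  have hfinal : HasSum (Tt a b q c) (S 0) := by
    have hc0 : c*q^0 = c := by rw [pow_zero, mul_one]
    have hsum0 := hSummableJ 0
    rw [hc0] at hsum0
    show HasSum (Tt a b q c) (∑' n, Tt a b q (c*q^0) n)
    rw [hc0]
    exact hsum0.hasSum
  rw [hS0] at hfinal
  exact hfinal
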